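/- Let G be a nonzero additive subgroup of ℂ, α, β ∈ ℂ, and suppose V(α,β,G) is reducible (so α ∈ G, β ∈ {0,1}). Then V(α,β,G) has a unique nontrivial irreducible subquotient V'(α,β,G), and its support is either α + G or G \ {0}. -/

import Mathlib

open Finsupp

/-- The action of `d_x` on the intermediate series module `V(α,β,G)` with basis `{v_y : y ∈ G}`:
`d_x v_y = (α + y + xβ) v_{x+y}` (the central element `C` acts by `0`). -/
noncomputable def dActL (G : AddSubgroup ℂ) (α β : ℂ) (x : ↥G) : (↥G →₀ ℂ) →ₗ[ℂ] (↥G →₀ ℂ) :=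
  Finsupp.lsum ℂ fun y : ↥G =>
    LinearMap.toSpanSingleton ℂ (↥G →₀ ℂ) ((α + (y : ℂ) + (x : ℂ) * β) • Finsupp.single (x + y) (1 : ℂ))

/-- Invariance of a subspace under the `Vir[G]`-action on `V(α,β,G)`. -/
def VirInvariant (G : AddSubgroup ℂ) (α β : ℂ) (S : Submodule ℂ (↥G →₀ ℂ)) : Prop :=
  ∀ x : ↥G, ∀ v ∈ S, dActL G α β x v ∈ S

/-- Helper instance (the general Mathlib instance, respelled to aid instance search). -/
noncomputable instance quotOfSubmodule (G : AddSubgroup ℂ) (S : Submodule ℂ (↥G →₀ ℂ)) :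
    HasQuotient ↥S (Submodule ℂ ↥S) := @Submodule.hasQuotient ℂ ↥S _ _ _

/-- The endomorphism induced by `d_x` on the subquotient `S/S'` of `V(α,β,G)`. -/
noncomputable def qEnd (G : AddSubgroup ℂ) (α β : ℂ) (S S' : Submodule ℂ (↥G →₀ ℂ))
    (hS : VirInvariant G α β S) (hS' : VirInvariant G α β S') (x : ↥G) :
    (↥S ⧸ S'.comap S.subtype) →ₗ[ℂ] (↥S ⧸ S'.comap S.subtype) :=
  Submodule.mapQ _ _
    ((dActL G α β x).restrict (hS x)) (by
      intro v hv
      simp only [Submodule.mem_comap, LinearMap.restrict_apply, Submodule.coe_subtype] at hv ⊢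
      exact hS' x _ hv)

variable (G : AddSubgroup ℂ) (α β : ℂ)

lemma dActL_single (x y : ↥G) (c : ℂ) :
    dActL G α β x (Finsupp.single y c) = (c * (α + (y:ℂ) + (x:ℂ)*β)) • Finsupp.single (x+y) (1:ℂ) := by
  unfold dActL
  rw [Finsupp.lsum_single, LinearMap.toSpanSingleton_apply, smul_smul]

lemma dActL_apply (x : ↥G) (f : ↥G →₀ ℂ) (z : ↥G) :
    dActL G α β x f z = (α + ((z:ℂ) - (x:ℂ)) + (x:ℂ)*β) * f (z - x) := by
  induction f using Finsupp.induction_linear with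
  | zero => simp
  | add f g hf hg => rw [map_add, Finsupp.add_apply, hf, hg, Finsupp.add_apply]; ring
  | single y c =>
    rw [dActL_single]
    by_cases h : z = x + y
    · subst h
      rw [Finsupp.smul_apply, Finsupp.single_eq_same]
      have h1 : (x + y : ↥G) - x = y := by abel
      rw [h1, Finsupp.single_eq_same]
      push_cast
      rw [smul_eq_mul]
      ring
    · rw [Finsupp.smul_apply, Finsupp.single_eq_of_ne' (fun hh => h hh.symm)]
      have h2 : z - x ≠ y := fun hh => h (by rw [← hh]; abel)
      rw [Finsupp.single_eq_of_ne' (fun hh => h2 hh.symm), smul_zero, mul_zero]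

lemma d0_apply (f : ↥G →₀ ℂ) (z : ↥G) :
    dActL G α β 0 f z = (α + (z:ℂ)) * f z := by
  rw [dActL_apply]
  simp

lemma coe_injG : Function.Injective (fun y : ↥G => (y : ℂ)) := Subtype.coe_injective

lemma single_one_mem_of_mem (T : Submodule ℂ (↥G →₀ ℂ))
    (hT : ∀ v ∈ T, dActL G α β 0 v ∈ T) :
    ∀ (n : ℕ) (v : ↥G →₀ ℂ), v.support.card ≤ n → v ∈ T → ∀ y₀ : ↥G, v y₀ ≠ 0 →
      Finsupp.single y₀ (1:ℂ) ∈ T := by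
  intro n
  induction n with
  | zero =>
    intro v hc hv y₀ hy
    simp [Finsupp.support_eq_empty.mp (Finset.card_eq_zero.mp (Nat.le_zero.mp hc))] at hy
  | succ n ih =>
    intro v hc hv y₀ hy
    by_cases hsupp : v.support ⊆ {y₀}
    · have hv1 : v = Finsupp.single y₀ (v y₀) :=
        (Finsupp.eq_single_iff.mpr ⟨hsupp, rfl⟩)
      have h2 : (v y₀)⁻¹ • Finsupp.single y₀ (v y₀) ∈ T := by
        rw [← hv1]; exact Submodule.smul_mem T _ hv
      rwa [Finsupp.smul_single', inv_mul_cancel₀ hy] at h2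
    · obtain ⟨y₁, hy₁s, hy₁⟩ : ∃ y₁ ∈ v.support, y₁ ∉ ({y₀} : Finset ↥G) := by
        rcases Finset.not_subset.mp hsupp with ⟨y₁, h1, h2⟩
        exact ⟨y₁, h1, h2⟩
      have hy₁0 : y₁ ≠ y₀ := by simpa using hy₁
      set w := dActL G α β 0 v - (α + (y₁:ℂ)) • v with hw
      have hwT : w ∈ T := Submodule.sub_mem T (hT v hv) (Submodule.smul_mem T _ hv)
      have hwapp : ∀ z : ↥G, w z = ((z:ℂ) - (y₁:ℂ)) * v z := by
        intro z
        rw [hw]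
        rw [Finsupp.sub_apply, Finsupp.smul_apply, d0_apply]
        rw [smul_eq_mul]; ring
      have hwy₀ : w y₀ ≠ 0 := by
        rw [hwapp]
        exact mul_ne_zero (sub_ne_zero.mpr (fun hh => hy₁0.symm (Subtype.coe_injective hh))) hy
      have hws : w.support ⊆ v.support.erase y₁ := by
        intro z hz
        rw [Finsupp.mem_support_iff, hwapp] at hz
        rcases mul_ne_zero_iff.mp hz with ⟨h1, h2⟩
        refine Finset.mem_erase.mpr ⟨fun hh => ?_, Finsupp.mem_support_iff.mpr h2⟩
        subst hh; simp at h1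
      have hcard : w.support.card ≤ n := by
        have := Finset.card_le_card hws
        rw [Finset.card_erase_of_mem hy₁s] at this
        omega
      exact ih w hcard hwT y₀ hwy₀

lemma top_le_of_singles (T : Submodule ℂ (↥G →₀ ℂ))
    (h : ∀ z : ↥G, Finsupp.single z (1:ℂ) ∈ T) : ∀ f : ↥G →₀ ℂ, f ∈ T := by
  intro f
  induction f using Finsupp.induction with
  | zero => exact Submodule.zero_mem T
  | single_add a b f _ _ ihf =>
    refine Submodule.add_mem T ?_ ihf
    have := Submodule.smul_mem T b (h a)
    rwa [Finsupp.smul_single', mul_one] at this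

lemma mem_span_single_iff (a : ↥G) (v : ↥G →₀ ℂ) :
    v ∈ Submodule.span ℂ {Finsupp.single a (1:ℂ)} ↔ ∀ z, z ≠ a → v z = 0 := by
  rw [Submodule.mem_span_singleton]
  constructor
  · rintro ⟨c, rfl⟩ z hz
    rw [Finsupp.smul_single', Finsupp.single_eq_of_ne' (Ne.symm hz)]
  · intro h
    refine ⟨v a, ?_⟩
    rw [Finsupp.smul_single', mul_one]
    ext z
    by_cases hz : z = a
    · subst hz; rw [Finsupp.single_eq_same]
    · rw [Finsupp.single_eq_of_ne' (Ne.symm hz), h z hz]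

lemma ker_le_of_singles (a : ↥G) (T : Submodule ℂ (↥G →₀ ℂ))
    (h : ∀ z : ↥G, z ≠ a → Finsupp.single z (1:ℂ) ∈ T) :
    ∀ f : ↥G →₀ ℂ, f a = 0 → f ∈ T := by
  intro f
  induction f using Finsupp.induction with
  | zero => intro _; exact Submodule.zero_mem T
  | single_add a' b f ha'f hb ihf =>
    intro h0
    rw [Finsupp.add_apply] at h0
    by_cases ha' : a' = a
    · subst ha'
      rw [Finsupp.single_eq_same, Finsupp.notMem_support_iff.mp ha'f, add_zero] at h0
      exact absurd h0 hb
    · rw [Finsupp.single_eq_of_ne' ha', zero_add] at h0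
      refine Submodule.add_mem T ?_ (ihf h0)
      have := Submodule.smul_mem T b (h a' ha')
      rwa [Finsupp.smul_single', mul_one] at this

lemma nonzero_coeff {v : ↥G →₀ ℂ} (hv : v ≠ 0) : ∃ z : ↥G, v z ≠ 0 := by
  by_contra h
  push_neg at h
  exact hv (Finsupp.ext fun z => h z)

lemma coeff_ne (a z : ↥G) (ha : (a:ℂ) = -α) (hz : z ≠ a) : α + (z:ℂ) ≠ 0 := by
  intro h
  apply hz
  apply Subtype.coe_injective
  show (z:ℂ) = (a:ℂ)
  rw [ha]; linear_combination h

lemma classify0 (a : ↥G) (ha : (a:ℂ) = -α) (T : Submodule ℂ (↥G →₀ ℂ))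
    (hT : ∀ x : ↥G, ∀ v ∈ T, dActL G α 0 x v ∈ T) :
    T = ⊥ ∨ T = Submodule.span ℂ {Finsupp.single a (1:ℂ)} ∨ T = ⊤ := by
  by_cases hb : T = ⊥
  · exact Or.inl hb
  obtain ⟨v, hv, hv0⟩ := (Submodule.ne_bot_iff T).mp hb
  have hTd0 : ∀ w ∈ T, dActL G α 0 0 w ∈ T := fun w hw => hT 0 w hw
  by_cases hK : ∀ w ∈ T, ∀ z : ↥G, z ≠ a → w z = 0
  · refine Or.inr (Or.inl (le_antisymm (fun w hw => (mem_span_single_iff G a w).mpr (hK w hw)) ?_))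
    rw [Submodule.span_le, Set.singleton_subset_iff]
    obtain ⟨z, hz⟩ := nonzero_coeff G hv0
    have hza : z = a := by
      by_contra hh
      exact hz (hK v hv z hh)
    subst hza
    exact single_one_mem_of_mem G α 0 T hTd0 v.support.card v le_rfl hv z hz
  · push_neg at hK
    obtain ⟨w, hw, z, hza, hz⟩ := hK
    have hsz : Finsupp.single z (1:ℂ) ∈ T :=
      single_one_mem_of_mem G α 0 T hTd0 w.support.card w le_rfl hw z hz
    have hall : ∀ u : ↥G, Finsupp.single u (1:ℂ) ∈ T := by
      intro u
      have h1 := hT (u - z) _ hsz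
      rw [dActL_single] at h1
      have h2 : (u - z) + z = u := by abel
      rw [h2] at h1
      have hc : (1 * (α + (z:ℂ) + ((u - z : ↥G):ℂ) * 0)) ≠ 0 := by
        rw [mul_zero, add_zero, one_mul]
        exact coeff_ne G α a z ha hza
      have h3 := Submodule.smul_mem T (1 * (α + (z:ℂ) + ((u - z : ↥G):ℂ) * 0))⁻¹ h1
      rwa [smul_smul, inv_mul_cancel₀ hc, one_smul] at h3
    exact Or.inr (Or.inr (Submodule.eq_top_iff'.mpr (top_le_of_singles G T hall)))

lemma classify1 (a : ↥G) (ha : (a:ℂ) = -α) (T : Submodule ℂ (↥G →₀ ℂ))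
    (hT : ∀ x : ↥G, ∀ v ∈ T, dActL G α 1 x v ∈ T) :
    T = ⊥ ∨ T = LinearMap.ker (Finsupp.lapply a) ∨ T = ⊤ := by
  by_cases hb : T = ⊥
  · exact Or.inl hb
  obtain ⟨v, hv, hv0⟩ := (Submodule.ne_bot_iff T).mp hb
  have hTd0 : ∀ w ∈ T, dActL G α 1 0 w ∈ T := fun w hw => hT 0 w hw
  obtain ⟨y₀, hy₀⟩ := nonzero_coeff G hv0
  have hs0 : Finsupp.single y₀ (1:ℂ) ∈ T :=
    single_one_mem_of_mem G α 1 T hTd0 v.support.card v le_rfl hv y₀ hy₀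
  have claimA : ∀ z : ↥G, z ≠ a → Finsupp.single z (1:ℂ) ∈ T := by
    intro z hza
    have h1 := hT (z - y₀) _ hs0
    rw [dActL_single] at h1
    have h2 : (z - y₀) + y₀ = z := by abel
    rw [h2] at h1
    have hc : (1 * (α + (y₀:ℂ) + ((z - y₀ : ↥G):ℂ) * 1)) ≠ 0 := by
      push_cast
      have := coeff_ne G α a z ha hza
      intro hh; apply this; linear_combination hh
    have h3 := Submodule.smul_mem T (1 * (α + (y₀:ℂ) + ((z - y₀ : ↥G):ℂ) * 1))⁻¹ h1
    rwa [smul_smul, inv_mul_cancel₀ hc, one_smul] at h3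
  by_cases hS : ∀ w ∈ T, w a = 0
  · refine Or.inr (Or.inl (le_antisymm (fun w hw => ?_) (fun f hf => ?_)))
    · rw [LinearMap.mem_ker, Finsupp.lapply_apply]
      exact hS w hw
    · rw [LinearMap.mem_ker, Finsupp.lapply_apply] at hf
      exact ker_le_of_singles G a T claimA f hf
  · push_neg at hS
    obtain ⟨w, hw, hwa⟩ := hS
    have hsa : Finsupp.single a (1:ℂ) ∈ T :=
      single_one_mem_of_mem G α 1 T hTd0 w.support.card w le_rfl hw a hwa
    refine Or.inr (Or.inr (Submodule.eq_top_iff'.mpr (top_le_of_singles G T (fun u => ?_))))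
    by_cases hu : u = a
    · subst hu; exact hsa
    · exact claimA u hu

lemma dAct0_K_zero (a : ↥G) (ha : (a:ℂ) = -α) (x : ↥G) (v : ↥G →₀ ℂ)
    (hv : v ∈ Submodule.span ℂ {Finsupp.single a (1:ℂ)}) : dActL G α 0 x v = 0 := by
  obtain ⟨c, rfl⟩ := Submodule.mem_span_singleton.mp hv
  rw [map_smul, dActL_single]
  have : (1 * (α + (a:ℂ) + (x:ℂ) * 0)) = 0 := by rw [ha]; ring
  rw [this, zero_smul, smul_zero]

lemma dAct1_mem_ker (a : ↥G) (ha : (a:ℂ) = -α) (x : ↥G) (v : ↥G →₀ ℂ) :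
    dActL G α 1 x v ∈ LinearMap.ker (Finsupp.lapply a : (↥G →₀ ℂ) →ₗ[ℂ] ℂ) := by
  rw [LinearMap.mem_ker, Finsupp.lapply_apply, dActL_apply]
  have : α + ((a:ℂ) - (x:ℂ)) + (x:ℂ) * 1 = 0 := by rw [ha]; ring
  rw [this, zero_mul]

lemma d0_eigen_single (a w : ↥G) (μ : ℂ) (hw : (w:ℂ) = μ - α) :
    dActL G α β 0 (Finsupp.single w (1:ℂ)) - μ • Finsupp.single w (1:ℂ) = 0 := by
  ext z
  rw [Finsupp.sub_apply, Finsupp.smul_apply, d0_apply, Finsupp.zero_apply, smul_eq_mul]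
  by_cases hz : z = w
  · subst hz; rw [hw]; ring
  · rw [Finsupp.single_eq_of_ne' (Ne.symm hz)]; ring

lemma support0_eq (a : ↥G) (ha : (a:ℂ) = -α) :
    {μ : ℂ | ∃ v ∈ (⊤ : Submodule ℂ (↥G →₀ ℂ)), v ∉ Submodule.span ℂ {Finsupp.single a (1:ℂ)} ∧
        dActL G α 0 0 v - μ • v ∈ Submodule.span ℂ {Finsupp.single a (1:ℂ)}} =
      {μ : ℂ | ∃ y : ↥G, (y : ℂ) ≠ 0 ∧ μ = (y : ℂ)} := by
  ext μ
  simp only [Set.mem_setOf_eq]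
  constructor
  · rintro ⟨v, -, hvK, hev⟩
    obtain ⟨z, hza, hz⟩ : ∃ z : ↥G, z ≠ a ∧ v z ≠ 0 := by
      by_contra h
      push_neg at h
      exact hvK ((mem_span_single_iff G a v).mpr (fun z hz => h z hz))
    have h1 := (mem_span_single_iff G a _).mp hev z hza
    rw [Finsupp.sub_apply, Finsupp.smul_apply, d0_apply, smul_eq_mul] at h1
    have hμ : μ = α + (z:ℂ) := by
      have h2 : (α + (z:ℂ) - μ) * v z = 0 := by linear_combination h1
      rcases mul_eq_zero.mp h2 with h3 | h3
      · linear_combination -h3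
      · exact absurd h3 hz
    refine ⟨z - a, ?_, ?_⟩
    · rw [AddSubgroup.coe_sub, ha]
      intro hh
      exact coeff_ne G α a z ha hza (by linear_combination hh)
    · rw [AddSubgroup.coe_sub, ha, hμ]; ring
  · rintro ⟨y, hy, rfl⟩
    refine ⟨Finsupp.single (y + a) (1:ℂ), Submodule.mem_top, ?_, ?_⟩
    · intro hmem
      have := (mem_span_single_iff G a _).mp hmem (y + a) (by
        intro hh
        apply hy
        rw [show y = 0 from by simpa using hh]
        simp)
      rw [Finsupp.single_eq_same] at this
      exact one_ne_zero this
    · rw [d0_eigen_single G α 0 a (y + a) _ (by rw [AddSubgroup.coe_add, ha]; ring)]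
      exact Submodule.zero_mem _

lemma support1_eq (a : ↥G) (ha : (a:ℂ) = -α) :
    {μ : ℂ | ∃ v ∈ LinearMap.ker (Finsupp.lapply a : (↥G →₀ ℂ) →ₗ[ℂ] ℂ),
        v ∉ (⊥ : Submodule ℂ (↥G →₀ ℂ)) ∧ dActL G α 1 0 v - μ • v ∈ (⊥ : Submodule ℂ (↥G →₀ ℂ))} =
      {μ : ℂ | ∃ y : ↥G, (y : ℂ) ≠ 0 ∧ μ = (y : ℂ)} := by
  ext μ
  simp only [Set.mem_setOf_eq, Submodule.mem_bot]
  constructor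
  · rintro ⟨v, hvS, hv0, hev⟩
    rw [LinearMap.mem_ker, Finsupp.lapply_apply] at hvS
    obtain ⟨z, hz⟩ := nonzero_coeff G hv0
    have hza : z ≠ a := fun hh => hz (hh ▸ hvS)
    have h1 : dActL G α 1 0 v z - μ • v z = 0 := by
      rw [← Finsupp.smul_apply, ← Finsupp.sub_apply, hev, Finsupp.zero_apply]
    rw [d0_apply, smul_eq_mul] at h1
    have hμ : μ = α + (z:ℂ) := by
      have h2 : (α + (z:ℂ) - μ) * v z = 0 := by linear_combination h1
      rcases mul_eq_zero.mp h2 with h3 | h3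
      · linear_combination -h3
      · exact absurd h3 hz
    refine ⟨z - a, ?_, ?_⟩
    · rw [AddSubgroup.coe_sub, ha]
      intro hh
      exact coeff_ne G α a z ha hza (by linear_combination hh)
    · rw [AddSubgroup.coe_sub, ha, hμ]; ring
  · rintro ⟨y, hy, rfl⟩
    have hyane : y + a ≠ a := by
      intro hh
      apply hy
      rw [show y = 0 from by simpa using hh]
      simp
    refine ⟨Finsupp.single (y + a) (1:ℂ), ?_, ?_, ?_⟩
    · rw [LinearMap.mem_ker, Finsupp.lapply_apply, Finsupp.single_eq_of_ne' hyane]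
    · intro hh
      have := DFunLike.congr_fun hh (y + a)
      rw [Finsupp.single_eq_same, Finsupp.zero_apply] at this
      exact one_ne_zero this
    · exact d0_eigen_single G α 1 a (y + a) _ (by rw [AddSubgroup.coe_add, ha]; ring)


/-- if `V(α,β,G)` is reducible (`α ∈ G`, `β ∈ {0,1}`), it has a unique
nontrivial irreducible subquotient `V'(α,β,G)`, whose support is `α + G` or `G \ {0}`. -/
theorem unique_nontrivial_irreducible_subquotient (G : AddSubgroup ℂ) (hG : G ≠ ⊥)
    (α β : ℂ) (hα : α ∈ G) (hβ : β = 0 ∨ β = 1) :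
    ∃ (S S' : Submodule ℂ (↥G →₀ ℂ)) (hS : VirInvariant G α β S)
      (hS' : VirInvariant G α β S') (_ : S' ≤ S),
      -- nontriviality: Vir[G] does not act by zero on S/S'
      (∃ x : ↥G, ∃ v ∈ S, dActL G α β x v ∉ S') ∧
      -- irreducibility of the subquotient S/S'
      (∀ T : Submodule ℂ (↥G →₀ ℂ), VirInvariant G α β T → S' ≤ T → T ≤ S →
        T = S' ∨ T = S) ∧
      -- the support of S/S' is α + G or G \ {0}
      ({μ : ℂ | ∃ v ∈ S, v ∉ S' ∧ dActL G α β 0 v - μ • v ∈ S'} =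
          {μ : ℂ | ∃ y : ↥G, μ = α + y} ∨
        {μ : ℂ | ∃ v ∈ S, v ∉ S' ∧ dActL G α β 0 v - μ • v ∈ S'} =
          {μ : ℂ | ∃ y : ↥G, (y : ℂ) ≠ 0 ∧ μ = (y : ℂ)}) ∧
      -- uniqueness: any other nontrivial irreducible subquotient is isomorphic to S/S'
      (∀ (T T' : Submodule ℂ (↥G →₀ ℂ)) (hT : VirInvariant G α β T)
          (hT' : VirInvariant G α β T') (_ : T' ≤ T),
        (∃ x : ↥G, ∃ v ∈ T, dActL G α β x v ∉ T') →
        (∀ R : Submodule ℂ (↥G →₀ ℂ), VirInvariant G α β R → T' ≤ R → R ≤ T →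
          R = T' ∨ R = T) →
        ∃ e : (↥S ⧸ S'.comap S.subtype) ≃ₗ[ℂ] (↥T ⧸ T'.comap T.subtype),
          ∀ x : ↥G,
            e.toLinearMap ∘ₗ qEnd G α β S S' hS hS' x =
              qEnd G α β T T' hT hT' x ∘ₗ e.toLinearMap) := by
  classical
  obtain ⟨g, hg⟩ := AddSubgroup.ne_bot_iff_exists_ne_zero.mp hG
  set a : ↥G := -⟨α, hα⟩ with ha_def
  have ha : (a:ℂ) = -α := rfl
  have hga : g + a ≠ a := by
    intro hh
    exact hg (by simpa using hh)
  -- generic facts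
  have hsa_ne : Finsupp.single a (1:ℂ) ≠ 0 := by
    intro hh
    have := DFunLike.congr_fun hh a
    rw [Finsupp.single_eq_same, Finsupp.zero_apply] at this
    exact one_ne_zero this
  rcases hβ with hβ0 | hβ1
  · -- β = 0 case
    subst hβ0
    set K : Submodule ℂ (↥G →₀ ℂ) := Submodule.span ℂ {Finsupp.single a (1:ℂ)} with hK_def
    have hK_ne_bot : K ≠ ⊥ := by
      intro hh
      exact hsa_ne (Submodule.mem_bot ℂ |>.mp
        (hh ▸ Submodule.mem_span_singleton_self (Finsupp.single a (1:ℂ))))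
    have hga_notK : Finsupp.single (g + a) (1:ℂ) ∉ K := by
      intro hmem
      have := (mem_span_single_iff G a _).mp hmem (g + a) hga
      rw [Finsupp.single_eq_same] at this
      exact one_ne_zero this
    have hK_ne_top : K ≠ ⊤ := by
      intro hh
      exact hga_notK (hh ▸ Submodule.mem_top)
    have hKinv : VirInvariant G α 0 K := by
      intro x v hv
      rw [dAct0_K_zero G α a ha x v hv]
      exact Submodule.zero_mem K
    have hTopInv : VirInvariant G α 0 (⊤ : Submodule ℂ (↥G →₀ ℂ)) :=
      fun _ _ _ => Submodule.mem_top
    refine ⟨⊤, K, hTopInv, hKinv, le_top, ?_, ?_, ?_, ?_⟩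
    · -- nontriviality
      refine ⟨0, Finsupp.single (g + a) (1:ℂ), Submodule.mem_top, ?_⟩
      intro hmem
      have := (mem_span_single_iff G a _).mp hmem (g + a) hga
      rw [d0_apply, Finsupp.single_eq_same, mul_one, AddSubgroup.coe_add, ha] at this
      exact hg (Subtype.coe_injective (show (g:ℂ) = ((0:↥G):ℂ) by
        push_cast
        linear_combination this))
    · -- irreducibility
      intro T hTinv hKT hTtop
      rcases classify0 G α a ha T hTinv with h | h | h
      · exact absurd (le_bot_iff.mp (h ▸ hKT)) hK_ne_bot
      · exact Or.inl h
      · exact Or.inr h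
    · exact Or.inr (support0_eq G α a ha)
    · -- uniqueness
      intro T T' hT hT' hT'T hnt hirr
      rcases classify0 G α a ha T hT with h1 | h1 | h1 <;>
        rcases classify0 G α a ha T' hT' with h2 | h2 | h2 <;>
        subst h1 <;> subst h2
      · -- ⊥ ⊥
        exfalso
        obtain ⟨x, v, hv, hn⟩ := hnt
        rw [Submodule.mem_bot] at hv
        exact hn (by rw [hv, map_zero]; exact Submodule.zero_mem _)
      · exact absurd (le_bot_iff.mp hT'T) hK_ne_bot
      · exact absurd (hsa_ne (Submodule.mem_bot ℂ |>.mp (hT'T Submodule.mem_top))) not_false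
      · -- K ⊥
        exfalso
        obtain ⟨x, v, hv, hn⟩ := hnt
        exact hn (by rw [dAct0_K_zero G α a ha x v hv]; exact Submodule.zero_mem _)
      · exfalso
        obtain ⟨x, v, hv, hn⟩ := hnt
        exact hn (hT x v hv)
      · exact absurd (top_le_iff.mp hT'T) hK_ne_top
      · -- ⊤ ⊥
        exfalso
        rcases hirr K hKinv bot_le le_top with h | h
        · exact hK_ne_bot h
        · exact hK_ne_top h
      · -- ⊤ K : the main case
        exact ⟨LinearEquiv.refl ℂ _, fun x => rfl⟩
      · exfalso
        obtain ⟨x, v, hv, hn⟩ := hnt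
        exact hn (hT x v hv)
  · -- β = 1 case
    subst hβ1
    set Sk : Submodule ℂ (↥G →₀ ℂ) := LinearMap.ker (Finsupp.lapply a : (↥G →₀ ℂ) →ₗ[ℂ] ℂ)
      with hSk_def
    have hmemSk : ∀ v : ↥G →₀ ℂ, v ∈ Sk ↔ v a = 0 := by
      intro v
      rw [hSk_def, LinearMap.mem_ker, Finsupp.lapply_apply]
    have hga_memSk : Finsupp.single (g + a) (1:ℂ) ∈ Sk := by
      rw [hmemSk, Finsupp.single_eq_of_ne' hga]
    have hga_ne : Finsupp.single (g + a) (1:ℂ) ≠ 0 := by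
      intro hh
      have := DFunLike.congr_fun hh (g + a)
      rw [Finsupp.single_eq_same, Finsupp.zero_apply] at this
      exact one_ne_zero this
    have hSk_ne_bot : Sk ≠ ⊥ := by
      intro hh
      exact hga_ne (Submodule.mem_bot ℂ |>.mp (hh ▸ hga_memSk))
    have hSk_ne_top : Sk ≠ ⊤ := by
      intro hh
      have : Finsupp.single a (1:ℂ) ∈ Sk := hh ▸ Submodule.mem_top
      rw [hmemSk, Finsupp.single_eq_same] at this
      exact one_ne_zero this
    have hSkInv : VirInvariant G α 1 Sk := fun x v _ => dAct1_mem_ker G α a ha x v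
    have hBotInv : VirInvariant G α 1 (⊥ : Submodule ℂ (↥G →₀ ℂ)) := by
      intro x v hv
      rw [Submodule.mem_bot] at hv ⊢
      rw [hv, map_zero]
    refine ⟨Sk, ⊥, hSkInv, hBotInv, bot_le, ?_, ?_, ?_, ?_⟩
    · -- nontriviality
      refine ⟨0, Finsupp.single (g + a) (1:ℂ), hga_memSk, ?_⟩
      rw [Submodule.mem_bot]
      intro hh
      have := DFunLike.congr_fun hh (g + a)
      rw [d0_apply, Finsupp.single_eq_same, mul_one, Finsupp.zero_apply,
        AddSubgroup.coe_add, ha] at this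
      exact hg (Subtype.coe_injective (show (g:ℂ) = ((0:↥G):ℂ) by
        push_cast
        linear_combination this))
    · -- irreducibility
      intro T hTinv hbotT hTSk
      rcases classify1 G α a ha T hTinv with h | h | h
      · exact Or.inl h
      · exact Or.inr h
      · exact absurd (top_le_iff.mp (h ▸ hTSk)) hSk_ne_top
    · exact Or.inr (support1_eq G α a ha)
    · -- uniqueness
      intro T T' hT hT' hT'T hnt hirr
      rcases classify1 G α a ha T hT with h1 | h1 | h1 <;>
        rcases classify1 G α a ha T' hT' with h2 | h2 | h2 <;>
        subst h1 <;> subst h2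
      · exfalso
        obtain ⟨x, v, hv, hn⟩ := hnt
        rw [Submodule.mem_bot] at hv
        exact hn (by rw [hv, map_zero]; exact Submodule.zero_mem _)
      · exact absurd (le_bot_iff.mp hT'T) hSk_ne_bot
      · exact absurd (hsa_ne (Submodule.mem_bot ℂ |>.mp (hT'T Submodule.mem_top))) not_false
      · -- Sk ⊥ : the main case
        exact ⟨LinearEquiv.refl ℂ _, fun x => rfl⟩
      · exfalso
        obtain ⟨x, v, hv, hn⟩ := hnt
        exact hn (hT x v hv)
      · exact absurd (top_le_iff.mp hT'T) hSk_ne_top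
      · exfalso
        rcases hirr Sk hSkInv bot_le le_top with h | h
        · exact hSk_ne_bot h
        · exact hSk_ne_top h
      · exfalso
        obtain ⟨x, v, hv, hn⟩ := hnt
        exact hn (dAct1_mem_ker G α a ha x v)
      · exfalso
        obtain ⟨x, v, hv, hn⟩ := hnt
        exact hn (hT x v hv)
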